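/- arXiv:1606.02549 — 2 statements merged into one kernel-verified Lean document; each statement's English description precedes it below -/
import Mathlib

section
/- Weighted L¹ → L² kernel estimate for the heat semigroup on ℝ^d. Let d ≥ 1, let β be a multi-index on ℝ^d with |β| ≤ 1 and let s ∈ [0, |β|]. Then there exists C ≥ 0 such that for every t > 0 and every φ ∈ L¹(ℝ^d, ℂ): ‖ x ↦ ⟨x⟩^{−s} ∫_{ℝ^d} ∂^β_x K(t, x−y) ⟨y⟩^{−s} φ(y) dy ‖_{L²(ℝ^d)} ≤ C t^{−d/4 − |β|/2 − s/2} ‖φ‖_{L¹(ℝ^d)}. -/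
open MeasureTheory
open scoped ENNReal

noncomputable section

/-- `ℝ^d`, as a Euclidean space. -/
abbrev Ed (d : ℕ) := EuclideanSpace ℝ (Fin d)

/-- The Japanese bracket `⟨x⟩ = (1 + |x|²)^(1/2)`. -/
noncomputable def jap {d : ℕ} (x : Ed d) : ℝ := Real.sqrt (1 + ‖x‖ ^ 2)

open Real

lemma one_le_jap {d : ℕ} (x : Ed d) : 1 ≤ jap x := by
  have h1 : jap x ^ 2 = 1 + ‖x‖ ^ 2 := Real.sq_sqrt (by nlinarith [sq_nonneg ‖x‖])
  have h0 : 0 ≤ jap x := Real.sqrt_nonneg _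
  nlinarith [sq_nonneg ‖x‖]

lemma jap_pos {d : ℕ} (x : Ed d) : 0 < jap x := lt_of_lt_of_le one_pos (one_le_jap x)

lemma jap_sq {d : ℕ} (x : Ed d) : jap x ^ 2 = 1 + ‖x‖ ^ 2 :=
  Real.sq_sqrt (by nlinarith [sq_nonneg ‖x‖])

lemma norm_le_jap {d : ℕ} (x : Ed d) : ‖x‖ ≤ jap x := by
  have h := jap_sq x
  nlinarith [jap_pos x, norm_nonneg x]

/-- Peetre-type inequality: `⟨x-y⟩ ≤ √2 ⟨x⟩ ⟨y⟩`, specialized form. -/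
lemma norm_sub_le_sqrt_two_mul_jap {d : ℕ} (x y : Ed d) :
    ‖x - y‖ ≤ Real.sqrt 2 * (jap x * jap y) := by
  have h1 : ‖x - y‖ ≤ ‖x‖ + ‖y‖ := norm_sub_le x y
  have h2 : (‖x‖ + ‖y‖) ^ 2 ≤ 2 * (jap x * jap y) ^ 2 := by
    have hx := jap_sq x; have hy := jap_sq y
    nlinarith [sq_nonneg (‖x‖ - ‖y‖), sq_nonneg (‖x‖ * ‖y‖ - 1), norm_nonneg x, norm_nonneg y]
  have h3 : ‖x - y‖ ^ 2 ≤ (Real.sqrt 2 * (jap x * jap y)) ^ 2 := by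
    rw [mul_pow, Real.sq_sqrt (by norm_num : (0:ℝ) ≤ 2)]
    nlinarith [norm_nonneg (x - y), norm_nonneg x, norm_nonneg y, add_nonneg (norm_nonneg x) (norm_nonneg y)]
  have h4 : 0 ≤ Real.sqrt 2 * (jap x * jap y) := by
    exact mul_nonneg (Real.sqrt_nonneg 2) (mul_nonneg (jap_pos x).le (jap_pos y).le)
  nlinarith [norm_nonneg (x - y)]

lemma coord_le_norm {d : ℕ} (x : Ed d) (j : Fin d) : |x j| ≤ ‖x‖ := by
  have h : ‖x‖ = Real.sqrt (∑ i, x i ^ 2) := by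
    rw [EuclideanSpace.norm_eq]
    congr 1
    exact Finset.sum_congr rfl fun i _ => by rw [Real.norm_eq_abs]; exact sq_abs _
  rw [h, show |x j| = Real.sqrt ((x j)^2) by rw [Real.sqrt_sq_eq_abs]]
  exact Real.sqrt_le_sqrt (Finset.single_le_sum (fun i _ => sq_nonneg (x i)) (Finset.mem_univ j))

/-- bound on the polynomial prefactor of the heat kernel derivative -/
lemma prod_bound {d : ℕ} (β : Fin d → ℕ) (t : ℝ) (ht : 0 < t) (x : Ed d) :
    |∏ j, (-(x j) / (2 * t)) ^ (β j)| ≤ (‖x‖ / (2 * t)) ^ (∑ j, β j) := by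
  rw [Finset.abs_prod, ← Finset.prod_pow_eq_pow_sum]
  refine Finset.prod_le_prod (fun j _ => abs_nonneg _) (fun j _ => ?_)
  rw [abs_pow]
  refine pow_le_pow_left₀ (abs_nonneg _) ?_ _
  rw [abs_div, abs_neg, abs_of_pos (by linarith : (0:ℝ) < 2 * t)]
  exact div_le_div_of_nonneg_right (coord_le_norm x j) (by linarith) |>.trans le_rfl

/-- Peetre-type weight absorption -/
lemma weight_bound {d : ℕ} {s a : ℝ} (hs : 0 ≤ s) (hsa : s ≤ a) (x y : Ed d) :
    jap x ^ (-s) * jap y ^ (-s) * ‖x - y‖ ^ a ≤ 2 ^ (s / 2) * ‖x - y‖ ^ (a - s) := by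
  have hjx := jap_pos x; have hjy := jap_pos y
  rcases eq_or_lt_of_le (norm_nonneg (x - y)) with hz | hz
  · rcases eq_or_lt_of_le hs with hs0 | hs0
    · subst hs0
      simp only [neg_zero, Real.rpow_zero, one_mul, sub_zero]
      norm_num
    · -- s > 0 hence a > 0, LHS has ‖x-y‖^a = 0
      rw [← hz, Real.zero_rpow (by linarith : a ≠ 0)]
      have : (0:ℝ) ≤ 2 ^ (s/2) * (0:ℝ) ^ (a - s) := by
        apply mul_nonneg (Real.rpow_nonneg (by norm_num) _) (Real.rpow_nonneg le_rfl _)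
      linarith [this]
  · -- ‖x - y‖ > 0
    have hkey : ‖x - y‖ / Real.sqrt 2 ≤ jap x * jap y := by
      rw [div_le_iff₀ (Real.sqrt_pos.mpr (by norm_num))]
      calc ‖x - y‖ ≤ Real.sqrt 2 * (jap x * jap y) := norm_sub_le_sqrt_two_mul_jap x y
        _ = jap x * jap y * Real.sqrt 2 := by ring
    have hpos : 0 < ‖x - y‖ / Real.sqrt 2 := by
      apply div_pos hz (Real.sqrt_pos.mpr (by norm_num))
    have h1 : (jap x * jap y) ^ (-s) ≤ (‖x - y‖ / Real.sqrt 2) ^ (-s) :=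
      Real.rpow_le_rpow_of_nonpos hpos hkey (by linarith)
    have h2 : jap x ^ (-s) * jap y ^ (-s) = (jap x * jap y) ^ (-s) :=
      (Real.mul_rpow hjx.le hjy.le).symm
    have h3 : (‖x - y‖ / Real.sqrt 2) ^ (-s) = 2 ^ (s/2) * ‖x - y‖ ^ (-s) := by
      rw [Real.div_rpow (norm_nonneg _) (Real.sqrt_nonneg 2), Real.sqrt_eq_rpow,
        ← Real.rpow_mul (by norm_num : (0:ℝ) ≤ 2),
        show (1/2 : ℝ) * (-s) = -(s/2) from by ring,
        Real.rpow_neg (by norm_num : (0:ℝ) ≤ 2), div_eq_mul_inv, inv_inv]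
      ring
    have h4 : ‖x - y‖ ^ (-s) * ‖x - y‖ ^ a = ‖x - y‖ ^ (a - s) := by
      rw [← Real.rpow_add hz]; ring_nf
    calc jap x ^ (-s) * jap y ^ (-s) * ‖x - y‖ ^ a
        = (jap x * jap y) ^ (-s) * ‖x - y‖ ^ a := by rw [h2]
      _ ≤ (‖x - y‖ / Real.sqrt 2) ^ (-s) * ‖x - y‖ ^ a := by
          apply mul_le_mul_of_nonneg_right h1 (Real.rpow_nonneg (norm_nonneg _) _)
      _ = 2 ^ (s/2) * (‖x - y‖ ^ (-s) * ‖x - y‖ ^ a) := by rw [h3]; ring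
      _ = 2 ^ (s/2) * ‖x - y‖ ^ (a - s) := by rw [h4]

/-- Gaussian-in-time bound: `r^a e^{-r²/(8t)} ≤ e² t^{a/2}` for `0 ≤ a ≤ 1`. -/
lemma gaussian_time_bound {a t r : ℝ} (ha0 : 0 ≤ a) (ha1 : a ≤ 1) (ht : 0 < t) (hr : 0 ≤ r) :
    r ^ a * Real.exp (-r ^ 2 / (8 * t)) ≤ Real.exp 2 * t ^ (a / 2) := by
  set u := r / Real.sqrt t with hu
  have hst : 0 < Real.sqrt t := Real.sqrt_pos.mpr ht
  have hu0 : 0 ≤ u := div_nonneg hr hst.le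
  have hru : r = Real.sqrt t * u := by rw [hu]; field_simp
  have hsq : Real.sqrt t ^ 2 = t := Real.sq_sqrt ht.le
  have hexp : -r ^ 2 / (8 * t) = -(u ^ 2) / 8 := by
    rw [hru, mul_pow, hsq]; field_simp
  have hra : r ^ a = t ^ (a/2) * u ^ a := by
    rw [hru, Real.mul_rpow hst.le hu0]
    congr 1
    rw [Real.sqrt_eq_rpow, ← Real.rpow_mul ht.le, show (1/2 : ℝ) * a = a/2 from by ring]
  have hkey : u ^ a * Real.exp (-(u ^ 2) / 8) ≤ Real.exp 2 := by
    rcases le_or_gt u 1 with h | h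
    · have h1 : u ^ a ≤ 1 := Real.rpow_le_one hu0 h ha0
      have h2 : Real.exp (-(u ^ 2) / 8) ≤ 1 := Real.exp_le_one_iff.mpr (by nlinarith)
      nlinarith [Real.one_le_exp (by norm_num : (0:ℝ) ≤ 2),
        Real.exp_nonneg (-(u ^ 2) / 8), Real.rpow_nonneg hu0 a]
    · have h1 : u ^ a ≤ u := by
        calc u ^ a ≤ u ^ (1:ℝ) := Real.rpow_le_rpow_of_exponent_le h.le ha1
          _ = u := Real.rpow_one u
      have h2 : u ≤ Real.exp u := (Real.add_one_le_exp u).trans' (by linarith)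
      calc u ^ a * Real.exp (-(u ^ 2) / 8) ≤ Real.exp u * Real.exp (-(u ^ 2) / 8) := by
            apply mul_le_mul_of_nonneg_right (h1.trans h2) (Real.exp_nonneg _)
        _ = Real.exp (u + -(u ^ 2) / 8) := (Real.exp_add _ _).symm
        _ ≤ Real.exp 2 := Real.exp_le_exp.mpr (by nlinarith [sq_nonneg (u - 4)])
  calc r ^ a * Real.exp (-r ^ 2 / (8 * t)) = t ^ (a/2) * (u ^ a * Real.exp (-(u^2)/8)) := by
        rw [hra, hexp]; ring
    _ ≤ t ^ (a/2) * Real.exp 2 := by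
        apply mul_le_mul_of_nonneg_left hkey (Real.rpow_nonneg ht.le _)
    _ = Real.exp 2 * t ^ (a / 2) := by ring

/-- The heat kernel `K(t,x) = (4πt)^{-d/2} exp(-|x|²/(4t))` on `ℝ^d`. -/
noncomputable def heatKernel (d : ℕ) (t : ℝ) (x : Ed d) : ℝ :=
  (4 * Real.pi * t) ^ (-(d : ℝ) / 2) * Real.exp (-‖x‖ ^ 2 / (4 * t))

/-- For a multi-index `β` with `|β| ≤ 1`, the derivative `∂^β_x K(t,x)` of the heat kernel:
for `β = 0` it is `K(t,x)` itself, and for `β` the `j`-th coordinate direction it is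
`-(xⱼ/(2t)) K(t,x)`. -/
noncomputable def heatKernelDeriv (d : ℕ) (β : Fin d → ℕ) (t : ℝ) (x : Ed d) : ℝ :=
  (∏ j, (-(x j) / (2 * t)) ^ (β j)) * heatKernel d t x

/-- The main pointwise kernel bound. -/
lemma kernel_bound {d : ℕ} (β : Fin d → ℕ) {s t : ℝ} (ht : 0 < t)
    (hs0 : 0 ≤ s) (hsb : s ≤ ((∑ j, β j : ℕ) : ℝ)) (hb : ∑ j, β j ≤ 1) (x y : Ed d) :
    jap x ^ (-s) * (|heatKernelDeriv d β t (x - y)| * jap y ^ (-s)) ≤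
      (2 ^ (s/2) * Real.exp 2 * (4 * Real.pi) ^ (-(d:ℝ)/2)) *
        t ^ (-(d:ℝ)/2 - ((∑ j, β j : ℕ) : ℝ)/2 - s/2) * Real.exp (-‖x - y‖ ^ 2 / (8 * t)) := by
  set b : ℕ := ∑ j, β j with hbdef
  set z : Ed d := x - y with hz
  set r : ℝ := ‖z‖ with hr
  have hr0 : 0 ≤ r := norm_nonneg z
  have hπ : 0 < Real.pi := Real.pi_pos
  set E8 : ℝ := Real.exp (-r ^ 2 / (8 * t)) with hE8
  have hE8pos : 0 < E8 := Real.exp_pos _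
  set C4 : ℝ := (4 * Real.pi) ^ (-(d:ℝ)/2) with hC4
  have hC4pos : 0 < C4 := Real.rpow_pos_of_pos (by positivity) _
  set W : ℝ := jap x ^ (-s) * jap y ^ (-s) with hW
  have hWpos : 0 < W := mul_pos (Real.rpow_pos_of_pos (jap_pos x) _)
    (Real.rpow_pos_of_pos (jap_pos y) _)
  -- decompose the heat kernel
  have hK : heatKernel d t z = C4 * t ^ (-(d:ℝ)/2) * (E8 * E8) := by
    rw [heatKernel, hC4, ← Real.mul_rpow (by positivity) ht.le, hE8, ← Real.exp_add]
    congr 2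
    field_simp
    ring
  have hKpos : 0 < heatKernel d t z := by
    rw [hK]; positivity
  -- bound on |heatKernelDeriv|
  have hP : |heatKernelDeriv d β t z| ≤ (r / (2 * t)) ^ b * heatKernel d t z := by
    rw [heatKernelDeriv, abs_mul, abs_of_pos hKpos]
    exact mul_le_mul_of_nonneg_right (prod_bound β t ht z) hKpos.le
  -- weight absorption
  have hA : W * r ^ ((b : ℝ)) ≤ 2 ^ (s/2) * r ^ ((b:ℝ) - s) := weight_bound hs0 hsb x y
  -- gaussian time bound
  have hB : r ^ ((b:ℝ) - s) * E8 ≤ Real.exp 2 * t ^ (((b:ℝ) - s)/2) :=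
    gaussian_time_bound (by linarith) (by
      have : ((b:ℝ)) ≤ 1 := by exact_mod_cast hb
      linarith) ht hr0
  -- powers of t
  have htb : ((2 * t) ^ b : ℝ)⁻¹ ≤ t ^ (-(b:ℝ)) := by
    have h1 : t ^ (-(b:ℝ)) = ((t ^ b : ℝ))⁻¹ := by
      rw [Real.rpow_neg ht.le, Real.rpow_natCast]
    rw [h1]
    exact inv_anti₀ (by positivity) (pow_le_pow_left₀ ht.le (by linarith) b)
  have hrb : (r : ℝ) ^ b = r ^ ((b:ℝ)) := (Real.rpow_natCast r b).symm
  calc jap x ^ (-s) * (|heatKernelDeriv d β t z| * jap y ^ (-s))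
      = W * |heatKernelDeriv d β t z| := by rw [hW]; ring
    _ ≤ W * ((r / (2 * t)) ^ b * heatKernel d t z) :=
        mul_le_mul_of_nonneg_left hP hWpos.le
    _ = (W * r ^ ((b:ℝ))) * (((2*t) ^ b)⁻¹ * (C4 * t ^ (-(d:ℝ)/2))) * (E8 * E8) := by
        rw [hK, div_pow, div_eq_mul_inv, hrb]; ring
    _ ≤ (2 ^ (s/2) * r ^ ((b:ℝ) - s)) * (((2*t) ^ b)⁻¹ * (C4 * t ^ (-(d:ℝ)/2))) * (E8 * E8) := by
        apply mul_le_mul_of_nonneg_right (mul_le_mul_of_nonneg_right hA (by positivity))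
        positivity
    _ ≤ (2 ^ (s/2) * r ^ ((b:ℝ) - s)) * ((t ^ (-(b:ℝ))) * (C4 * t ^ (-(d:ℝ)/2))) * (E8 * E8) := by
        apply mul_le_mul_of_nonneg_right _ (by positivity)
        apply mul_le_mul_of_nonneg_left _ (by positivity)
        exact mul_le_mul_of_nonneg_right htb (by positivity)
    _ = (2 ^ (s/2)) * (r ^ ((b:ℝ) - s) * E8) * ((t ^ (-(b:ℝ))) * (C4 * t ^ (-(d:ℝ)/2))) * E8 := by
        ring
    _ ≤ (2 ^ (s/2)) * (Real.exp 2 * t ^ (((b:ℝ) - s)/2)) *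
          ((t ^ (-(b:ℝ))) * (C4 * t ^ (-(d:ℝ)/2))) * E8 := by
        apply mul_le_mul_of_nonneg_right _ hE8pos.le
        apply mul_le_mul_of_nonneg_right _ (by positivity)
        exact mul_le_mul_of_nonneg_left hB (by positivity)
    _ = (2 ^ (s/2) * Real.exp 2 * C4) *
          (t ^ (((b:ℝ) - s)/2) * t ^ (-(b:ℝ)) * t ^ (-(d:ℝ)/2)) * E8 := by ring
    _ = (2 ^ (s/2) * Real.exp 2 * C4) * t ^ (-(d:ℝ)/2 - (b:ℝ)/2 - s/2) * E8 := by
        rw [← Real.rpow_add ht, ← Real.rpow_add ht]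
        congr 2
        ring

/-- **Weighted `L¹ → L²` kernel estimate for the heat semigroup on `ℝ^d`.** -/
theorem heat_semigroup_weighted_L1_L2_bound
    (d : ℕ) (hd : 1 ≤ d) (β : Fin d → ℕ) (hβ : ∑ j, β j ≤ 1)
    (s : ℝ) (hs : s ∈ Set.Icc (0 : ℝ) ((∑ j, β j : ℕ) : ℝ)) :
    ∃ C : ℝ, 0 ≤ C ∧
      ∀ t : ℝ, 0 < t →
        ∀ φ : Ed d → ℂ, MemLp φ 1 volume →
          eLpNorm (fun x => jap x ^ (-s) • ∫ y, (heatKernelDeriv d β t (x - y) * jap y ^ (-s)) • φ y)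
              2 volume ≤
            ENNReal.ofReal
                (C * t ^ (-(d : ℝ) / 4 - ((∑ j, β j : ℕ) : ℝ) / 2 - s / 2)) *
              eLpNorm φ 1 volume := by
  obtain ⟨hs0, hsb⟩ := hs
  have hπ : 0 < Real.pi := Real.pi_pos
  refine ⟨2 ^ (s/2) * Real.exp 2 * (4*Real.pi) ^ (-(d:ℝ)/2) * (4*Real.pi) ^ ((d:ℝ)/4),
    by positivity, ?_⟩
  intro t ht φ hφ
  set b : ℕ := ∑ j, β j with hbdef
  set C₁ : ℝ := 2 ^ (s/2) * Real.exp 2 * (4*Real.pi) ^ (-(d:ℝ)/2) with hC₁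
  have hC₁pos : 0 < C₁ := by positivity
  set e₁ : ℝ := -(d:ℝ)/2 - (b:ℝ)/2 - s/2 with he₁
  set A : ℝ≥0∞ := ENNReal.ofReal (C₁ * t ^ e₁) with hA
  have hAne : A ≠ ⊤ := ENNReal.ofReal_ne_top
  set g : Ed d → ℝ≥0∞ := fun z => ENNReal.ofReal (Real.exp (-‖z‖ ^ 2 / (8*t))) with hg
  have hgmeas : Measurable g := by
    apply ENNReal.measurable_ofReal.comp
    apply Continuous.measurable
    exact Real.continuous_exp.comp (by fun_prop)
  set Φ : Ed d → ℝ≥0∞ := fun y => (‖φ y‖₊ : ℝ≥0∞) with hΦm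
  have hΦmeas : AEMeasurable Φ volume := hφ.aestronglyMeasurable.enorm
  set Q : ℝ≥0∞ := ∫⁻ y, Φ y with hQdef
  have hQ : Q = eLpNorm φ 1 volume := by rw [eLpNorm_one_eq_lintegral_enorm]; rfl
  have hQne : Q ≠ ⊤ := by rw [hQ]; exact hφ.2.ne
  set I : Ed d → ℝ≥0∞ := fun x => ∫⁻ y, g (x - y) * Φ y with hI
  -- Step A: pointwise bound
  have stepA : ∀ x : Ed d,
      (‖jap x ^ (-s) • ∫ y, (heatKernelDeriv d β t (x - y) * jap y ^ (-s)) • φ y‖₊ : ℝ≥0∞)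
        ≤ A * I x := by
    intro x
    have hy : ∀ y : Ed d,
        (‖jap x ^ (-s)‖₊ : ℝ≥0∞) * ‖(heatKernelDeriv d β t (x - y) * jap y ^ (-s)) • φ y‖₊
          ≤ (A * g (x - y)) * Φ y := by
      intro y
      rw [nnnorm_smul, ENNReal.coe_mul, ← mul_assoc]
      refine mul_le_mul_left ?_ _
      rw [← enorm_eq_nnnorm, ← enorm_eq_nnnorm, Real.enorm_eq_ofReal_abs, Real.enorm_eq_ofReal_abs, ← ENNReal.ofReal_mul (abs_nonneg _),
        hA, ← ENNReal.ofReal_mul (by positivity)]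
      apply ENNReal.ofReal_le_ofReal
      have h1 : |jap x ^ (-s)| = jap x ^ (-s) := abs_of_nonneg (Real.rpow_nonneg (jap_pos x).le _)
      have h2 : |heatKernelDeriv d β t (x - y) * jap y ^ (-s)| =
          |heatKernelDeriv d β t (x - y)| * jap y ^ (-s) := by
        rw [abs_mul, abs_of_nonneg (Real.rpow_nonneg (jap_pos y).le _)]
      rw [h1, h2, ← mul_assoc, mul_assoc]
      exact kernel_bound β ht hs0 hsb hβ x y
    calc (‖jap x ^ (-s) • ∫ y, (heatKernelDeriv d β t (x - y) * jap y ^ (-s)) • φ y‖₊ : ℝ≥0∞)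
        = (‖jap x ^ (-s)‖₊ : ℝ≥0∞) *
            ‖∫ y, (heatKernelDeriv d β t (x - y) * jap y ^ (-s)) • φ y‖₊ := by
          rw [nnnorm_smul, ENNReal.coe_mul]
      _ ≤ (‖jap x ^ (-s)‖₊ : ℝ≥0∞) *
            ∫⁻ y, ‖(heatKernelDeriv d β t (x - y) * jap y ^ (-s)) • φ y‖₊ :=
          mul_le_mul_right (enorm_integral_le_lintegral_enorm _) _
      _ = ∫⁻ y, (‖jap x ^ (-s)‖₊ : ℝ≥0∞) *
            ‖(heatKernelDeriv d β t (x - y) * jap y ^ (-s)) • φ y‖₊ :=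
          (lintegral_const_mul' _ _ ENNReal.coe_ne_top).symm
      _ ≤ ∫⁻ y, (A * g (x - y)) * Φ y := lintegral_mono fun y => hy y
      _ = A * I x := by
          simp_rw [mul_assoc]
          exact lintegral_const_mul' _ _ hAne
  -- Cauchy-Schwarz in y for fixed x
  have hconj : (2:ℝ).HolderConjugate 2 := Real.holderConjugate_iff.mpr ⟨by norm_num, by norm_num⟩
  have hCS : ∀ x : Ed d, I x ^ (2:ℝ) ≤ (∫⁻ y, g (x-y) ^ (2:ℝ) * Φ y) * Q := by
    intro x
    have hf1 : AEMeasurable (fun y : Ed d => g (x - y) * Φ y ^ ((1:ℝ)/2)) volume := by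
      exact ((hgmeas.comp (measurable_const.sub measurable_id)).aemeasurable).mul
        (hΦmeas.pow aemeasurable_const)
    have hf2 : AEMeasurable (fun y : Ed d => Φ y ^ ((1:ℝ)/2)) volume :=
      hΦmeas.pow aemeasurable_const
    have hsplit : ∀ y : Ed d, g (x - y) * Φ y =
        (g (x - y) * Φ y ^ ((1:ℝ)/2)) * (Φ y ^ ((1:ℝ)/2)) := by
      intro y
      rw [mul_assoc, ← ENNReal.rpow_add_of_nonneg _ _ (by norm_num) (by norm_num)]
      norm_num
    have key := ENNReal.lintegral_mul_le_Lp_mul_Lq volume hconj hf1 hf2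
    have hIle : I x ≤ (∫⁻ y, (g (x-y) * Φ y ^ ((1:ℝ)/2)) ^ (2:ℝ)) ^ ((1:ℝ)/2) *
        (∫⁻ y, (Φ y ^ ((1:ℝ)/2)) ^ (2:ℝ)) ^ ((1:ℝ)/2) := by
      calc I x = ∫⁻ y, (fun y => g (x - y) * Φ y ^ ((1:ℝ)/2)) y *
            (fun y => Φ y ^ ((1:ℝ)/2)) y := by
            rw [hI]; exact lintegral_congr fun y => hsplit y
        _ ≤ _ := key
    have hsq1 : ∀ y : Ed d, (g (x-y) * Φ y ^ ((1:ℝ)/2)) ^ (2:ℝ) = g (x-y) ^ (2:ℝ) * Φ y := by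
      intro y
      rw [ENNReal.mul_rpow_of_nonneg _ _ (by norm_num : (0:ℝ) ≤ 2), ← ENNReal.rpow_mul]
      norm_num
    have hsq2 : ∀ y : Ed d, (Φ y ^ ((1:ℝ)/2)) ^ (2:ℝ) = Φ y := by
      intro y
      rw [← ENNReal.rpow_mul]
      norm_num
    calc I x ^ (2:ℝ) ≤ ((∫⁻ y, (g (x-y) * Φ y ^ ((1:ℝ)/2)) ^ (2:ℝ)) ^ ((1:ℝ)/2) *
          (∫⁻ y, (Φ y ^ ((1:ℝ)/2)) ^ (2:ℝ)) ^ ((1:ℝ)/2)) ^ (2:ℝ) :=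
          ENNReal.rpow_le_rpow hIle (by norm_num)
      _ = (∫⁻ y, (g (x-y) * Φ y ^ ((1:ℝ)/2)) ^ (2:ℝ)) *
          (∫⁻ y, (Φ y ^ ((1:ℝ)/2)) ^ (2:ℝ)) := by
          rw [ENNReal.mul_rpow_of_nonneg _ _ (by norm_num : (0:ℝ) ≤ 2),
            ← ENNReal.rpow_mul, ← ENNReal.rpow_mul]
          norm_num
      _ = (∫⁻ y, g (x-y) ^ (2:ℝ) * Φ y) * Q := by
          rw [lintegral_congr hsq1, lintegral_congr hsq2]
  -- Gaussian L² computation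
  have hb4 : (0:ℝ) < 1/(4*t) := by positivity
  have hint : Integrable (fun z : Ed d => Real.exp (-(1/(4*t)) * ‖z‖ ^ 2)) volume := by
    have h := (GaussianFourier.integrable_cexp_neg_mul_sq_norm_add (V := Ed d)
        (b := ((1/(4*t) : ℝ) : ℂ)) (by simpa using hb4) 0 0).norm
    refine h.congr (Filter.Eventually.of_forall fun v => ?_)
    simp [Complex.norm_exp]
    exact Or.inl (by rw [← Complex.ofReal_pow, Complex.ofReal_re])
  have hfr : ((Module.finrank ℝ (Ed d) : ℝ)) = (d:ℝ) := by
    simp [finrank_euclideanSpace]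
  have hG : (∫⁻ z : Ed d, g z ^ (2:ℝ)) = ENNReal.ofReal ((4*Real.pi*t) ^ ((d:ℝ)/2)) := by
    have h1 : ∀ z : Ed d, g z ^ (2:ℝ) = ENNReal.ofReal (Real.exp (-(1/(4*t)) * ‖z‖ ^ 2)) := by
      intro z
      rw [hg]
      rw [ENNReal.ofReal_rpow_of_nonneg (Real.exp_nonneg _) (by norm_num)]
      congr 1
      rw [show (2:ℝ) = ((2:ℕ):ℝ) by norm_num, Real.rpow_natCast, pow_two, ← Real.exp_add]
      congr 1
      field_simp
      ring
    simp_rw [h1]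
    rw [← ofReal_integral_eq_lintegral_ofReal hint
      (Filter.Eventually.of_forall fun z => Real.exp_nonneg _)]
    rw [GaussianFourier.integral_rexp_neg_mul_sq_norm (V := Ed d) hb4, hfr]
    congr 1
    congr 1
    field_simp
  set G2 : ℝ≥0∞ := ∫⁻ z : Ed d, g z ^ (2:ℝ) with hG2def
  have hG2ne : G2 ≠ ⊤ := by rw [hG]; exact ENNReal.ofReal_ne_top
  -- Tonelli / translation invariance
  have hswap : (∫⁻ x : Ed d, ∫⁻ y, g (x-y) ^ (2:ℝ) * Φ y) = G2 * Q := by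
    have hmeas2 : AEMeasurable (Function.uncurry fun x y : Ed d => g (x - y) ^ (2:ℝ) * Φ y)
        ((volume : Measure (Ed d)).prod volume) := by
      apply AEMeasurable.mul
      · exact (((hgmeas.comp (measurable_fst.sub measurable_snd)).pow_const _)).aemeasurable
      · exact hΦmeas.comp_quasiMeasurePreserving Measure.quasiMeasurePreserving_snd
    rw [lintegral_lintegral_swap hmeas2]
    have hinner : ∀ y : Ed d, (∫⁻ x : Ed d, g (x - y) ^ (2:ℝ) * Φ y) = G2 * Φ y := by
      intro y
      rw [lintegral_mul_const' _ _ ENNReal.coe_ne_top,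
        lintegral_sub_right_eq_self (fun z => g z ^ (2:ℝ)) y, mul_comm]
    calc (∫⁻ y : Ed d, ∫⁻ x : Ed d, g (x - y) ^ (2:ℝ) * Φ y) = ∫⁻ y, G2 * Φ y :=
          lintegral_congr hinner
      _ = G2 * Q := lintegral_const_mul' _ _ hG2ne
  -- assemble
  have hmain : eLpNorm (fun x => jap x ^ (-s) •
      ∫ y, (heatKernelDeriv d β t (x - y) * jap y ^ (-s)) • φ y) 2 volume ≤
      A * (G2 ^ ((1:ℝ)/2) * Q) := by
    rw [eLpNorm_eq_lintegral_rpow_enorm_toReal (by norm_num) (by norm_num)]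
    have htoReal : ((2:ℝ≥0∞)).toReal = (2:ℝ) := by norm_num
    rw [htoReal]
    calc (∫⁻ x, (‖jap x ^ (-s) •
            ∫ y, (heatKernelDeriv d β t (x - y) * jap y ^ (-s)) • φ y‖₊ : ℝ≥0∞) ^ (2:ℝ)) ^ ((1:ℝ)/2)
        ≤ (∫⁻ x, (A * I x) ^ (2:ℝ)) ^ ((1:ℝ)/2) := by
          apply ENNReal.rpow_le_rpow _ (by norm_num)
          exact lintegral_mono fun x => ENNReal.rpow_le_rpow (stepA x) (by norm_num)
      _ = A * (∫⁻ x, I x ^ (2:ℝ)) ^ ((1:ℝ)/2) := by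
          simp_rw [ENNReal.mul_rpow_of_nonneg _ _ (by norm_num : (0:ℝ) ≤ 2)]
          rw [lintegral_const_mul' _ _ (ENNReal.rpow_ne_top_of_nonneg (by norm_num) hAne),
            ENNReal.mul_rpow_of_nonneg _ _ (by norm_num : (0:ℝ) ≤ 1/2),
            ← ENNReal.rpow_mul]
          norm_num
      _ ≤ A * ((G2 * Q) * Q) ^ ((1:ℝ)/2) := by
          apply mul_le_mul_right
          apply ENNReal.rpow_le_rpow _ (by norm_num)
          calc (∫⁻ x, I x ^ (2:ℝ)) ≤ ∫⁻ x, (∫⁻ y, g (x-y) ^ (2:ℝ) * Φ y) * Q :=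
                lintegral_mono fun x => hCS x
            _ = (∫⁻ x, ∫⁻ y, g (x-y) ^ (2:ℝ) * Φ y) * Q := lintegral_mul_const' _ _ hQne
            _ = (G2 * Q) * Q := by rw [hswap]
      _ = A * (G2 ^ ((1:ℝ)/2) * Q) := by
          congr 1
          rw [mul_assoc, ENNReal.mul_rpow_of_nonneg _ _ (by norm_num : (0:ℝ) ≤ 1/2)]
          congr 1
          rw [show Q * Q = Q ^ (2:ℝ) by
            rw [show (2:ℝ) = ((2:ℕ):ℝ) by norm_num, ENNReal.rpow_natCast, pow_two]]
          rw [← ENNReal.rpow_mul]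
          norm_num
  refine hmain.trans ?_
  -- final constant computation
  have hfin : A * (G2 ^ ((1:ℝ)/2) * Q) =
      ENNReal.ofReal ((2 ^ (s/2) * Real.exp 2 * (4*Real.pi) ^ (-(d:ℝ)/2) * (4*Real.pi) ^ ((d:ℝ)/4)) *
        t ^ (-(d:ℝ)/4 - (b:ℝ)/2 - s/2)) * Q := by
    rw [hG, hA]
    rw [ENNReal.ofReal_rpow_of_nonneg (by positivity) (by norm_num : (0:ℝ) ≤ 1/2)]
    rw [← mul_assoc, ← ENNReal.ofReal_mul (by positivity)]
    congr 1
    rw [← Real.rpow_mul (by positivity)]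
    rw [Real.mul_rpow (by positivity : (0:ℝ) ≤ 4*Real.pi) ht.le]
    rw [show (d:ℝ)/2 * (1/2) = (d:ℝ)/4 by ring]
    rw [he₁]
    rw [show C₁ * t ^ (-(d:ℝ)/2 - (b:ℝ)/2 - s/2) * ((4*Real.pi) ^ ((d:ℝ)/4) * t ^ ((d:ℝ)/4)) =
      (C₁ * (4*Real.pi) ^ ((d:ℝ)/4)) * (t ^ (-(d:ℝ)/2 - (b:ℝ)/2 - s/2) * t ^ ((d:ℝ)/4)) by ring]
    rw [← Real.rpow_add ht]
    rw [hC₁]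
    congr 1
    ring_nf
  rw [hfin, hQ]


end
end

section
/- Weighted L² → L^∞ and L¹ → L^∞ kernel estimates for the heat semigroup on ℝ^d. Let d ≥ 1, let β be a multi-index on ℝ^d with |β| ≤ 1 and let s ∈ [0, |β|]. Then there exists C ≥ 0 such that for every t > 0, writing (T_t φ)(x) = ⟨x⟩^{−s} ∫_{ℝ^d} ∂^β_x K(t, x−y) ⟨y⟩^{−s} φ(y) dy, one has ‖T_t φ‖_{L^∞(ℝ^d)} ≤ C t^{−d/4 − |β|/2 − s/2} ‖φ‖_{L²(ℝ^d)} for all φ ∈ L²(ℝ^d, ℂ), and ‖T_t φ‖_{L^∞(ℝ^d)} ≤ C t^{−d/2 − |β|/2 − s/2} ‖φ‖_{L¹(ℝ^d)} for all φ ∈ L¹(ℝ^d, ℂ). -/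
open MeasureTheory
open scoped ENNReal

noncomputable section

namespace HeatAux

variable {d : ℕ}

lemma one_le_jap (x : Ed d) : 1 ≤ jap x := by
  rw [jap]
  have := Real.sqrt_le_sqrt (show (1:ℝ) ≤ 1 + ‖x‖^2 by nlinarith [sq_nonneg ‖x‖])
  simpa using this

lemma jap_pos (x : Ed d) : 0 < jap x := lt_of_lt_of_le one_pos (one_le_jap x)

lemma norm_le_jap (x : Ed d) : ‖x‖ ≤ jap x := by
  rw [jap]
  have h : ‖x‖ = Real.sqrt (‖x‖^2) := (Real.sqrt_sq (norm_nonneg x)).symm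
  calc ‖x‖ = Real.sqrt (‖x‖^2) := h
  _ ≤ Real.sqrt (1 + ‖x‖^2) := Real.sqrt_le_sqrt (by nlinarith)

lemma jap_rpow_neg_nonneg (s : ℝ) (x : Ed d) : 0 ≤ jap x ^ (-s) :=
  Real.rpow_nonneg (jap_pos x).le _

lemma jap_rpow_neg_le_one {s : ℝ} (hs : 0 ≤ s) (x : Ed d) : jap x ^ (-s) ≤ 1 :=
  Real.rpow_le_one_of_one_le_of_nonpos (one_le_jap x) (by linarith)

lemma jap_sub_le (x y : Ed d) : jap (x - y) ≤ Real.sqrt 2 * (jap x * jap y) := by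
  rw [jap, jap, jap, ← Real.sqrt_mul (by positivity), ← Real.sqrt_mul (by norm_num)]
  apply Real.sqrt_le_sqrt
  have h1 : ‖x - y‖ ≤ ‖x‖ + ‖y‖ := norm_sub_le x y
  have h2 : ‖x - y‖^2 ≤ (‖x‖ + ‖y‖)^2 := by
    exact pow_le_pow_left₀ (norm_nonneg _) h1 2
  nlinarith [sq_nonneg (‖x‖ - ‖y‖), sq_nonneg (‖x‖ * ‖y‖)]

lemma peetre {s : ℝ} (hs : 0 ≤ s) (x y : Ed d) :
    jap x ^ (-s) * jap y ^ (-s) ≤ 2 ^ (s/2) * jap (x - y) ^ (-s) := by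
  have h2 : (0:ℝ) < Real.sqrt 2 := by positivity
  have hxy : 0 < jap x * jap y := mul_pos (jap_pos x) (jap_pos y)
  have key : jap (x - y) / Real.sqrt 2 ≤ jap x * jap y := by
    rw [div_le_iff₀ h2]
    calc jap (x - y) ≤ Real.sqrt 2 * (jap x * jap y) := jap_sub_le x y
    _ = jap x * jap y * Real.sqrt 2 := by ring
  have hpos : 0 < jap (x - y) / Real.sqrt 2 := div_pos (jap_pos _) h2
  have step : (jap x * jap y) ^ (-s) ≤ (jap (x - y) / Real.sqrt 2) ^ (-s) :=
    Real.rpow_le_rpow_of_nonpos hpos key (by linarith)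
  rw [← Real.mul_rpow (jap_pos x).le (jap_pos y).le]
  refine step.trans_eq ?_
  rw [Real.div_rpow (jap_pos _).le h2.le]
  have hsq : (Real.sqrt 2) ^ (-s) = 2 ^ (-(s/2)) := by
    rw [Real.sqrt_eq_rpow, ← Real.rpow_mul (by norm_num : (0:ℝ) ≤ 2)]
    congr 1; ring
  rw [hsq, Real.rpow_neg (by norm_num : (0:ℝ) ≤ 2), div_eq_mul_inv, inv_inv, mul_comm]

lemma rpow_le_one_add {u θ : ℝ} (hu : 0 ≤ u) (h0 : 0 ≤ θ) (h1 : θ ≤ 1) : u ^ θ ≤ 1 + u := by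
  rcases le_total u 1 with h | h
  · exact (Real.rpow_le_one hu h h0).trans (by linarith)
  · calc u ^ θ ≤ u ^ (1:ℝ) := Real.rpow_le_rpow_of_exponent_le h h1
    _ = u := Real.rpow_one u
    _ ≤ 1 + u := by linarith

lemma rpow_mul_exp_le {r a c : ℝ} (hr : 0 ≤ r) (ha : 0 ≤ a) (ha2 : a ≤ 2) (hc : 0 < c) :
    r ^ a * Real.exp (-(c * r^2)) ≤ c ^ (-(a/2)) := by
  have h1 : r ^ a = (c * r^2) ^ (a/2) * c ^ (-(a/2)) := by
    rw [Real.mul_rpow hc.le (by positivity), Real.rpow_neg hc.le]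
    rw [← Real.rpow_natCast r 2, ← Real.rpow_mul hr]
    rw [show (2:ℕ) * (a/2) = a by push_cast; ring]
    field_simp
  rw [h1]
  have h2 : (c * r^2) ^ (a/2) ≤ Real.exp (c * r^2) := by
    calc (c * r^2) ^ (a/2) ≤ 1 + c * r^2 := rpow_le_one_add (by positivity) (by linarith) (by linarith)
    _ ≤ Real.exp (c * r^2) := by linarith [Real.add_one_le_exp (c * r^2)]
  calc (c * r^2) ^ (a/2) * c ^ (-(a/2)) * Real.exp (-(c * r^2))
      ≤ Real.exp (c * r^2) * c ^ (-(a/2)) * Real.exp (-(c * r^2)) := by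
        have hb : 0 ≤ c ^ (-(a/2)) := Real.rpow_nonneg hc.le _
        have he : 0 ≤ Real.exp (-(c * r^2)) := (Real.exp_pos _).le
        exact mul_le_mul_of_nonneg_right (mul_le_mul_of_nonneg_right h2 hb) he
    _ = c ^ (-(a/2)) := by rw [mul_comm (Real.exp _), mul_assoc, ← Real.exp_add]; simp

lemma coord_abs_le_norm (z : Ed d) (j : Fin d) : |z j| ≤ ‖z‖ := by
  rw [EuclideanSpace.norm_eq, show |z j| = Real.sqrt (‖z j‖^2) by
    rw [Real.sqrt_sq (norm_nonneg _)]; exact rfl]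
  exact Real.sqrt_le_sqrt (Finset.single_le_sum (f := fun i => ‖z i‖^2)
    (fun i _ => by positivity) (Finset.mem_univ j))

lemma heatKernel_pos {t : ℝ} (ht : 0 < t) (z : Ed d) : 0 < heatKernel d t z := by
  rw [heatKernel]
  have : (0:ℝ) < 4 * Real.pi * t := by positivity
  positivity

lemma abs_heatKernelDeriv_le {t : ℝ} (ht : 0 < t) (β : Fin d → ℕ) (z : Ed d) :
    |heatKernelDeriv d β t z| ≤ (‖z‖ / (2*t)) ^ (∑ j, β j) * heatKernel d t z := by
  rw [heatKernelDeriv, abs_mul, abs_of_pos (heatKernel_pos ht z)]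
  apply mul_le_mul_of_nonneg_right ?_ (heatKernel_pos ht z).le
  rw [Finset.abs_prod, ← Finset.prod_pow_eq_pow_sum]
  refine Finset.prod_le_prod (fun i _ => abs_nonneg _) (fun i _ => ?_)
  rw [abs_pow]
  apply pow_le_pow_left₀ (abs_nonneg _)
  rw [abs_div, abs_neg, abs_of_pos (by positivity : (0:ℝ) < 2*t)]
  apply div_le_div_of_nonneg_right ?_ (by positivity)
  exact coord_abs_le_norm z i

end HeatAux


namespace HeatAux

variable {d : ℕ}

lemma gauss_lintegral (d : ℕ) {t : ℝ} (ht : 0 < t) :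
    ∫⁻ z : Ed d, ENNReal.ofReal (Real.exp (-(‖z‖^2/(4*t)))) =
      ENNReal.ofReal ((4*Real.pi*t) ^ ((d:ℝ)/2)) := by
  have hb : 0 < (4*t)⁻¹ := by positivity
  have hint : Integrable (fun z : Ed d => Real.exp (-(4*t)⁻¹ * ‖z‖^2)) := by
    have h := (GaussianFourier.integrable_cexp_neg_mul_sq_norm_add (V := Ed d)
      (b := ((4*t)⁻¹ : ℂ)) (by simpa using hb) 0 0).norm
    apply h.congr
    filter_upwards with z
    rw [zero_mul, add_zero, Complex.norm_exp]
    congr 1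
    rw [show -((4*t)⁻¹:ℂ) * (‖z‖:ℂ)^2 = ((-(4*t)⁻¹ * ‖z‖^2 : ℝ) : ℂ) by push_cast; ring,
      Complex.ofReal_re]
  have heq : ∀ z : Ed d, -(‖z‖^2/(4*t)) = -(4*t)⁻¹ * ‖z‖^2 := fun z => by ring
  simp_rw [heq]
  rw [← ofReal_integral_eq_lintegral_ofReal hint
    (Filter.Eventually.of_forall fun z => (Real.exp_pos _).le)]
  rw [GaussianFourier.integral_rexp_neg_mul_sq_norm (V := Ed d) hb]
  congr 1
  rw [finrank_euclideanSpace_fin]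
  rw [show Real.pi / (4*t)⁻¹ = 4 * Real.pi * t by field_simp]

end HeatAux

namespace HeatAux

variable {d : ℕ}

lemma rpow_sq {x : ℝ} (hx : 0 ≤ x) (e : ℝ) : (x ^ e) ^ 2 = x ^ (e * 2) := by
  rw [← Real.rpow_natCast (x ^ e) 2, ← Real.rpow_mul hx]
  norm_num

/-- Step A': `‖z‖^b * ⟨z⟩^(-s) ≤ ‖z‖^(b-s)` -/
lemma norm_rpow_mul_jap_le {β : Fin d → ℕ} (hβ : ∑ j, β j ≤ 1) {s : ℝ}
    (hs0 : 0 ≤ s) (hsb : s ≤ ((∑ j, β j : ℕ) : ℝ)) (z : Ed d) :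
    ‖z‖ ^ ((∑ j, β j : ℕ) : ℝ) * jap z ^ (-s) ≤ ‖z‖ ^ (((∑ j, β j : ℕ) : ℝ) - s) := by
  rcases eq_or_lt_of_le (norm_nonneg z) with hz | hz
  · rcases Nat.le_one_iff_eq_zero_or_eq_one.mp hβ with h0 | h1
    · have hs : s = 0 := le_antisymm (by rw [h0] at hsb; simpa using hsb) hs0
      simp [h0, hs]
    · rw [h1]
      have h1' : ((1:ℕ):ℝ) - s = 1 - s := by norm_num
      rw [h1', ← hz]
      rw [Real.zero_rpow (by norm_num : ((1:ℕ):ℝ) ≠ 0), zero_mul]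
      exact Real.rpow_nonneg le_rfl _
  · have hj : jap z ^ (-s) ≤ ‖z‖ ^ (-s) :=
      Real.rpow_le_rpow_of_nonpos hz (norm_le_jap z) (by linarith)
    calc ‖z‖ ^ ((∑ j, β j : ℕ) : ℝ) * jap z ^ (-s)
        ≤ ‖z‖ ^ ((∑ j, β j : ℕ) : ℝ) * ‖z‖ ^ (-s) := by
          exact mul_le_mul_of_nonneg_left hj (Real.rpow_nonneg (norm_nonneg z) _)
      _ = ‖z‖ ^ (((∑ j, β j : ℕ) : ℝ) + -s) := (Real.rpow_add hz _ _).symm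
      _ = ‖z‖ ^ (((∑ j, β j : ℕ) : ℝ) - s) := by rw [← sub_eq_add_neg]

/-- The master pointwise bound. -/
lemma kernel_master {β : Fin d → ℕ} (hβ : ∑ j, β j ≤ 1) {s : ℝ}
    (hs0 : 0 ≤ s) (hsb : s ≤ ((∑ j, β j : ℕ) : ℝ)) {t : ℝ} (ht : 0 < t) (z : Ed d) :
    |heatKernelDeriv d β t z| * jap z ^ (-s) ≤
      (2*t) ^ (-((∑ j, β j : ℕ) : ℝ)) * (4*Real.pi*t) ^ (-(d:ℝ)/2) *
        (‖z‖ ^ (((∑ j, β j : ℕ) : ℝ) - s) * Real.exp (-(‖z‖^2/(4*t)))) := by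
  have h2t : (0:ℝ) < 2*t := by linarith
  have hK : 0 < heatKernel d t z := heatKernel_pos ht z
  calc |heatKernelDeriv d β t z| * jap z ^ (-s)
      ≤ ((‖z‖ / (2*t)) ^ (∑ j, β j) * heatKernel d t z) * jap z ^ (-s) :=
        mul_le_mul_of_nonneg_right (abs_heatKernelDeriv_le ht β z) (jap_rpow_neg_nonneg s z)
    _ = (2*t) ^ (-((∑ j, β j : ℕ) : ℝ)) * (‖z‖ ^ ((∑ j, β j : ℕ) : ℝ) * jap z ^ (-s)) *
          heatKernel d t z := by
        rw [div_pow, ← Real.rpow_natCast ‖z‖ (∑ j, β j), ← Real.rpow_natCast (2*t) (∑ j, β j),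
          div_eq_mul_inv, ← Real.rpow_neg h2t.le]
        ring
    _ ≤ (2*t) ^ (-((∑ j, β j : ℕ) : ℝ)) * ‖z‖ ^ (((∑ j, β j : ℕ) : ℝ) - s) *
          heatKernel d t z := by
        exact mul_le_mul_of_nonneg_right
          (mul_le_mul_of_nonneg_left (norm_rpow_mul_jap_le hβ hs0 hsb z)
            (Real.rpow_nonneg h2t.le _)) hK.le
    _ = (2*t) ^ (-((∑ j, β j : ℕ) : ℝ)) * (4*Real.pi*t) ^ (-(d:ℝ)/2) *
          (‖z‖ ^ (((∑ j, β j : ℕ) : ℝ) - s) * Real.exp (-(‖z‖^2/(4*t)))) := by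
        rw [heatKernel, show -‖z‖^2/(4*t) = -(‖z‖^2/(4*t)) by ring]
        ring

end HeatAux

namespace HeatAux

variable {d : ℕ}

lemma inv_rpow_neg {x : ℝ} (hx : 0 < x) (e : ℝ) : (x⁻¹) ^ (-e) = x ^ e := by
  rw [Real.inv_rpow hx.le, ← Real.rpow_neg hx.le, neg_neg]

lemma kernel_sup_bound (β : Fin d → ℕ) (hβ : ∑ j, β j ≤ 1) {s : ℝ}
    (hs0 : 0 ≤ s) (hsb : s ≤ ((∑ j, β j : ℕ) : ℝ)) :
    ∃ C : ℝ, 0 ≤ C ∧ ∀ t : ℝ, 0 < t → ∀ z : Ed d,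
      |heatKernelDeriv d β t z| * jap z ^ (-s) ≤
        C * t ^ (-(d:ℝ)/2 - ((∑ j, β j : ℕ):ℝ)/2 - s/2) := by
  set b : ℝ := ((∑ j, β j : ℕ) : ℝ) with hbdef
  have hb0 : (0:ℝ) ≤ b := by positivity
  have hb1 : b ≤ 1 := by rw [hbdef]; exact_mod_cast hβ
  have hpi := Real.pi_pos
  refine ⟨2^(-b) * 4^((b-s)/2) * (4*Real.pi)^(-(d:ℝ)/2), by positivity, fun t ht z => ?_⟩
  have h2t : (0:ℝ) < 2*t := by linarith
  have h4t : (0:ℝ) < 4*t := by linarith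
  have hc : (0:ℝ) < (4*t)⁻¹ := by positivity
  have hB : ‖z‖ ^ (b - s) * Real.exp (-(‖z‖^2/(4*t))) ≤ (4*t) ^ ((b-s)/2) := by
    have h := rpow_mul_exp_le (norm_nonneg z) (by linarith : (0:ℝ) ≤ b - s)
      (by linarith : b - s ≤ 2) hc
    rw [show ((4*t)⁻¹ * ‖z‖^2) = (‖z‖^2/(4*t)) by ring] at h
    rwa [inv_rpow_neg h4t ((b-s)/2)] at h
  have ht3 : t^(-b) * t^(-(d:ℝ)/2) * t^((b-s)/2) = t^(-(d:ℝ)/2 - b/2 - s/2) := by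
    rw [← Real.rpow_add ht, ← Real.rpow_add ht]; congr 1; ring
  calc |heatKernelDeriv d β t z| * jap z ^ (-s)
      ≤ (2*t) ^ (-b) * (4*Real.pi*t) ^ (-(d:ℝ)/2) *
          (‖z‖ ^ (b - s) * Real.exp (-(‖z‖^2/(4*t)))) := kernel_master hβ hs0 hsb ht z
    _ ≤ (2*t) ^ (-b) * (4*Real.pi*t) ^ (-(d:ℝ)/2) * (4*t) ^ ((b-s)/2) := by
        apply mul_le_mul_of_nonneg_left hB
        positivity
    _ = (2^(-b) * 4^((b-s)/2) * (4*Real.pi)^(-(d:ℝ)/2)) * t ^ (-(d:ℝ)/2 - b/2 - s/2) := by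
        rw [Real.mul_rpow (by norm_num : (0:ℝ) ≤ 2) ht.le,
          Real.mul_rpow (by positivity : (0:ℝ) ≤ 4*Real.pi) ht.le,
          Real.mul_rpow (by norm_num : (0:ℝ) ≤ 4) ht.le]
        rw [show 2^(-b)*t^(-b) * ((4*Real.pi)^(-(d:ℝ)/2)*t^(-(d:ℝ)/2)) *
              (4^((b-s)/2)*t^((b-s)/2)) =
            (2^(-b) * 4^((b-s)/2) * (4*Real.pi)^(-(d:ℝ)/2)) *
              (t^(-b)*t^(-(d:ℝ)/2)*t^((b-s)/2)) by ring, ht3]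

lemma kernel_sq_bound (β : Fin d → ℕ) (hβ : ∑ j, β j ≤ 1) {s : ℝ}
    (hs0 : 0 ≤ s) (hsb : s ≤ ((∑ j, β j : ℕ) : ℝ)) :
    ∃ C : ℝ, 0 ≤ C ∧ ∀ t : ℝ, 0 < t → ∀ z : Ed d,
      (|heatKernelDeriv d β t z| * jap z ^ (-s))^2 ≤
        C * t ^ (-(d:ℝ) - ((∑ j, β j : ℕ):ℝ) - s) * Real.exp (-(‖z‖^2/(4*t))) := by
  set b : ℝ := ((∑ j, β j : ℕ) : ℝ) with hbdef
  have hb0 : (0:ℝ) ≤ b := by positivity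
  have hb1 : b ≤ 1 := by rw [hbdef]; exact_mod_cast hβ
  have hpi := Real.pi_pos
  refine ⟨2^(-b*2) * 4^(b-s) * (4*Real.pi)^(-(d:ℝ)), by positivity, fun t ht z => ?_⟩
  have h2t : (0:ℝ) < 2*t := by linarith
  have h4t : (0:ℝ) < 4*t := by linarith
  have h4pt : (0:ℝ) < 4*Real.pi*t := by positivity
  have hc : (0:ℝ) < (4*t)⁻¹ := by positivity
  have hB : ‖z‖ ^ ((b - s)*2) * Real.exp (-(‖z‖^2/(4*t))) ≤ (4*t) ^ (b-s) := by
    have h := rpow_mul_exp_le (norm_nonneg z) (by nlinarith : (0:ℝ) ≤ (b - s)*2)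
      (by nlinarith : (b - s)*2 ≤ 2) hc
    rw [show ((4*t)⁻¹ * ‖z‖^2) = (‖z‖^2/(4*t)) by ring] at h
    rw [show -((b-s)*2/2) = -(b-s) by ring] at h
    rwa [inv_rpow_neg h4t (b-s)] at h
  have hmaster := kernel_master hβ hs0 hsb ht z
  have hLHS0 : 0 ≤ |heatKernelDeriv d β t z| * jap z ^ (-s) :=
    mul_nonneg (abs_nonneg _) (jap_rpow_neg_nonneg s z)
  calc (|heatKernelDeriv d β t z| * jap z ^ (-s))^2
      ≤ ((2*t) ^ (-b) * (4*Real.pi*t) ^ (-(d:ℝ)/2) *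
          (‖z‖ ^ (b - s) * Real.exp (-(‖z‖^2/(4*t)))))^2 :=
        pow_le_pow_left₀ hLHS0 hmaster 2
    _ = (2*t) ^ (-b*2) * (4*Real.pi*t) ^ (-(d:ℝ)) *
          ((‖z‖ ^ ((b-s)*2) * Real.exp (-(‖z‖^2/(4*t)))) * Real.exp (-(‖z‖^2/(4*t)))) := by
        rw [mul_pow, mul_pow, mul_pow, rpow_sq h2t.le, rpow_sq h4pt.le, rpow_sq (norm_nonneg z)]
        rw [show -(d:ℝ)/2*2 = -(d:ℝ) by ring]
        ring
    _ ≤ (2*t) ^ (-b*2) * (4*Real.pi*t) ^ (-(d:ℝ)) *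
          ((4*t) ^ (b-s) * Real.exp (-(‖z‖^2/(4*t)))) := by
        apply mul_le_mul_of_nonneg_left ?_ (by positivity)
        exact mul_le_mul_of_nonneg_right hB (Real.exp_pos _).le
    _ = (2^(-b*2) * 4^(b-s) * (4*Real.pi)^(-(d:ℝ))) * t ^ (-(d:ℝ) - b - s) *
          Real.exp (-(‖z‖^2/(4*t))) := by
        rw [Real.mul_rpow (by norm_num : (0:ℝ) ≤ 2) ht.le,
          Real.mul_rpow (by positivity : (0:ℝ) ≤ 4*Real.pi) ht.le,
          Real.mul_rpow (by norm_num : (0:ℝ) ≤ 4) ht.le]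
        have ht3 : t^(-b*2) * t^(-(d:ℝ)) * t^(b-s) = t^(-(d:ℝ) - b - s) := by
          rw [← Real.rpow_add ht, ← Real.rpow_add ht]; congr 1; ring
        rw [show 2^(-b*2)*t^(-b*2) * ((4*Real.pi)^(-(d:ℝ))*t^(-(d:ℝ))) *
              (4^(b-s)*t^(b-s) * Real.exp (-(‖z‖^2/(4*t)))) =
            (2^(-b*2) * 4^(b-s) * (4*Real.pi)^(-(d:ℝ))) *
              (t^(-b*2)*t^(-(d:ℝ))*t^(b-s)) * Real.exp (-(‖z‖^2/(4*t))) by ring, ht3]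

end HeatAux

namespace HeatAux

variable {d : ℕ}

lemma jap_continuous : Continuous (jap (d := d)) := by
  unfold jap
  exact Real.continuous_sqrt.comp (continuous_const.add ((continuous_norm).pow 2))

lemma jap_rpow_continuous (s : ℝ) : Continuous (fun z : Ed d => jap z ^ (-s)) :=
  jap_continuous.rpow_const fun z => Or.inl (jap_pos z).ne'

lemma heatKernelDeriv_continuous (β : Fin d → ℕ) (t : ℝ) :
    Continuous (heatKernelDeriv d β t) := by
  unfold heatKernelDeriv heatKernel
  apply Continuous.mul
  · apply continuous_finset_prod
    intro j _
    exact ((EuclideanSpace.proj j).continuous.neg.div_const _).pow _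
  · exact continuous_const.mul
      (Real.continuous_exp.comp (((continuous_norm.pow 2).neg).div_const _))

end HeatAux


/-- **Weighted `L² → L^∞` and `L¹ → L^∞` kernel estimates for the heat semigroup on `ℝ^d`.**
Here `(T_t φ)(x) = ⟨x⟩^{-s} ∫ ∂^β_x K(t,x-y) ⟨y⟩^{-s} φ(y) dy`. -/
theorem heat_semigroup_weighted_Linfty_bounds
    (d : ℕ) (hd : 1 ≤ d) (β : Fin d → ℕ) (hβ : ∑ j, β j ≤ 1)
    (s : ℝ) (hs : s ∈ Set.Icc (0 : ℝ) ((∑ j, β j : ℕ) : ℝ)) :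
    ∃ C : ℝ, 0 ≤ C ∧
      ∀ t : ℝ, 0 < t →
        (∀ φ : Ed d → ℂ, MemLp φ 2 volume →
          eLpNorm
              (fun x => jap x ^ (-s) • ∫ y, (heatKernelDeriv d β t (x - y) * jap y ^ (-s)) • φ y)
              ⊤ volume ≤
            ENNReal.ofReal (C * t ^ (-(d : ℝ) / 4 - ((∑ j, β j : ℕ) : ℝ) / 2 - s / 2)) *
              eLpNorm φ 2 volume) ∧
        (∀ φ : Ed d → ℂ, MemLp φ 1 volume →
          eLpNorm
              (fun x => jap x ^ (-s) • ∫ y, (heatKernelDeriv d β t (x - y) * jap y ^ (-s)) • φ y)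
              ⊤ volume ≤
            ENNReal.ofReal (C * t ^ (-(d : ℝ) / 2 - ((∑ j, β j : ℕ) : ℝ) / 2 - s / 2)) *
              eLpNorm φ 1 volume) := by
  open HeatAux in
  obtain ⟨hs0, hsb⟩ := hs
  obtain ⟨C1, hC1, hK1⟩ := HeatAux.kernel_sup_bound β hβ hs0 hsb
  obtain ⟨C2, hC2, hK2⟩ := HeatAux.kernel_sq_bound β hβ hs0 hsb
  have hpi := Real.pi_pos
  set D : ℝ := Real.sqrt (2^s * C2 * (4*Real.pi)^((d:ℝ)/2)) with hDdef
  have hD : 0 ≤ D := Real.sqrt_nonneg _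
  have hCtot : (0:ℝ) ≤ 2^(s/2) * C1 + D := by positivity
  refine ⟨2^(s/2) * C1 + D, hCtot, fun t ht => ?_⟩
  set g : Ed d → ℝ := fun z => 2^(s/2) * (|heatKernelDeriv d β t z| * jap z ^ (-s)) with hgdef
  have hg0 : ∀ z, 0 ≤ g z := fun z => by
    have := HeatAux.jap_rpow_neg_nonneg s z
    have := abs_nonneg (heatKernelDeriv d β t z)
    positivity
  have hgcont : Continuous g :=
    continuous_const.mul ((HeatAux.heatKernelDeriv_continuous β t).abs.mul
      (HeatAux.jap_rpow_continuous s))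
  -- the key pointwise estimate
  have key : ∀ (φ : Ed d → ℂ) (x : Ed d),
      ENNReal.ofReal ‖jap x ^ (-s) •
          ∫ y, (heatKernelDeriv d β t (x - y) * jap y ^ (-s)) • φ y‖ ≤
        ∫⁻ y, ENNReal.ofReal (g (x - y)) * (‖φ y‖₊ : ℝ≥0∞) := by
    intro φ x
    calc ENNReal.ofReal ‖jap x ^ (-s) •
          ∫ y, (heatKernelDeriv d β t (x - y) * jap y ^ (-s)) • φ y‖
        = ENNReal.ofReal (jap x ^ (-s)) *
            ENNReal.ofReal ‖∫ y, (heatKernelDeriv d β t (x - y) * jap y ^ (-s)) • φ y‖ := by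
          rw [norm_smul, ← ENNReal.ofReal_mul (HeatAux.jap_rpow_neg_nonneg s x)]
          congr 2
          rw [Real.norm_eq_abs, abs_of_nonneg (HeatAux.jap_rpow_neg_nonneg s x)]
      _ ≤ ENNReal.ofReal (jap x ^ (-s)) *
            ∫⁻ y, ENNReal.ofReal ‖(heatKernelDeriv d β t (x - y) * jap y ^ (-s)) • φ y‖ := by
          apply mul_le_mul_right
          rw [ofReal_norm]
          simp_rw [ofReal_norm]
          exact enorm_integral_le_lintegral_enorm _
      _ = ∫⁻ y, ENNReal.ofReal (jap x ^ (-s)) *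
            ENNReal.ofReal ‖(heatKernelDeriv d β t (x - y) * jap y ^ (-s)) • φ y‖ :=
          (lintegral_const_mul' _ _ ENNReal.ofReal_ne_top).symm
      _ ≤ ∫⁻ y, ENNReal.ofReal (g (x - y)) * (‖φ y‖₊ : ℝ≥0∞) := by
          apply lintegral_mono
          intro y
          dsimp only
          have h1 : ‖(heatKernelDeriv d β t (x - y) * jap y ^ (-s)) • φ y‖ =
              (|heatKernelDeriv d β t (x - y)| * jap y ^ (-s)) * ‖φ y‖ := by
            rw [norm_smul, Real.norm_eq_abs, abs_mul,
              abs_of_nonneg (HeatAux.jap_rpow_neg_nonneg s y)]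
          rw [h1, ← (show ENNReal.ofReal ‖φ y‖ = (‖φ y‖₊ : ℝ≥0∞) from ofReal_norm (φ y)),
            ← ENNReal.ofReal_mul (HeatAux.jap_rpow_neg_nonneg s x),
            ← ENNReal.ofReal_mul (hg0 _)]
          apply ENNReal.ofReal_le_ofReal
          rw [show jap x ^ (-s) * ((|heatKernelDeriv d β t (x - y)| * jap y ^ (-s)) * ‖φ y‖) =
            (jap x ^ (-s) * (|heatKernelDeriv d β t (x - y)| * jap y ^ (-s))) * ‖φ y‖ by ring]
          apply mul_le_mul_of_nonneg_right ?_ (norm_nonneg (φ y))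
          calc jap x ^ (-s) * (|heatKernelDeriv d β t (x - y)| * jap y ^ (-s))
              = |heatKernelDeriv d β t (x - y)| * (jap x ^ (-s) * jap y ^ (-s)) := by ring
            _ ≤ |heatKernelDeriv d β t (x - y)| * (2 ^ (s/2) * jap (x - y) ^ (-s)) :=
                mul_le_mul_of_nonneg_left (HeatAux.peetre hs0 x y) (abs_nonneg _)
            _ = g (x - y) := by rw [hgdef]; ring
  constructor
  · -- L² → L∞
    intro φ hφ
    set e2 : ℝ := -(d : ℝ) / 4 - ((∑ j, β j : ℕ) : ℝ) / 2 - s / 2 with he2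
    set B : ℝ≥0∞ := ENNReal.ofReal ((2^(s/2) * C1 + D) * t ^ e2) * eLpNorm φ 2 volume with hBdef
    have hBne : B ≠ ⊤ := ENNReal.mul_ne_top ENNReal.ofReal_ne_top hφ.eLpNorm_ne_top
    have hbnd : ∀ x : Ed d, ENNReal.ofReal ‖jap x ^ (-s) •
        ∫ y, (heatKernelDeriv d β t (x - y) * jap y ^ (-s)) • φ y‖ ≤ B := by
      intro x
      refine (key φ x).trans ?_
      have hAmeas : AEMeasurable (fun y : Ed d => ENNReal.ofReal (g (x - y))) volume :=
        (ENNReal.measurable_ofReal.comp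
          (hgcont.comp (continuous_const.sub continuous_id)).measurable).aemeasurable
      have hBmeas : AEMeasurable (fun y : Ed d => (‖φ y‖₊ : ℝ≥0∞)) volume :=
        hφ.aestronglyMeasurable.enorm
      have hconj : Real.HolderConjugate 2 2 := Real.HolderConjugate.two_two
      have holder := ENNReal.lintegral_mul_le_Lp_mul_Lq volume hconj hAmeas hBmeas
      simp only [Pi.mul_apply] at holder
      refine holder.trans ?_
      have hsnorm : (∫⁻ y, (‖φ y‖₊ : ℝ≥0∞) ^ (2:ℝ)) ^ (1/(2:ℝ)) = eLpNorm φ 2 volume := by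
        rw [eLpNorm_eq_lintegral_rpow_enorm_toReal (by norm_num) (by norm_num)]
        norm_num
        rfl
      rw [hsnorm, hBdef]
      apply mul_le_mul_left
      -- bound the kernel factor
      have hsq : ∀ y : Ed d, (ENNReal.ofReal (g (x - y))) ^ (2:ℝ) ≤
          ENNReal.ofReal ((2^s * (C2 * t ^ (-(d:ℝ) - ((∑ j, β j : ℕ):ℝ) - s))) *
            Real.exp (-(‖x - y‖^2/(4*t)))) := by
        intro y
        rw [ENNReal.ofReal_rpow_of_nonneg (hg0 _) (by norm_num)]
        apply ENNReal.ofReal_le_ofReal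
        rw [show g (x - y) ^ (2:ℝ) = g (x - y)^2 from by
          rw [← Real.rpow_natCast (g (x - y)) 2]; norm_num]
        calc g (x - y) ^ (2:ℕ)
            = 2^s * (|heatKernelDeriv d β t (x - y)| * jap (x - y) ^ (-s))^2 := by
              rw [hgdef, mul_pow, HeatAux.rpow_sq (by norm_num : (0:ℝ) ≤ 2)]
              rw [show s/2*2 = s by ring]
          _ ≤ 2^s * (C2 * t ^ (-(d:ℝ) - ((∑ j, β j : ℕ):ℝ) - s) *
                Real.exp (-(‖x - y‖^2/(4*t)))) := by
              apply mul_le_mul_of_nonneg_left (hK2 t ht (x - y)) (by positivity)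
          _ = (2^s * (C2 * t ^ (-(d:ℝ) - ((∑ j, β j : ℕ):ℝ) - s))) *
                Real.exp (-(‖x - y‖^2/(4*t))) := by ring
      have htrans : ∫⁻ y : Ed d, ENNReal.ofReal (Real.exp (-(‖x - y‖^2/(4*t)))) =
          ENNReal.ofReal ((4*Real.pi*t) ^ ((d:ℝ)/2)) := by
        simp_rw [norm_sub_rev x]
        exact (lintegral_sub_right_eq_self
          (fun z : Ed d => ENNReal.ofReal (Real.exp (-(‖z‖^2/(4*t))))) x).trans
          (HeatAux.gauss_lintegral d ht)
      calc (∫⁻ y, (ENNReal.ofReal (g (x - y))) ^ (2:ℝ)) ^ (1/(2:ℝ))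
          ≤ (∫⁻ y, ENNReal.ofReal ((2^s * (C2 * t ^ (-(d:ℝ) - ((∑ j, β j : ℕ):ℝ) - s))) *
              Real.exp (-(‖x - y‖^2/(4*t))))) ^ (1/(2:ℝ)) := by
            exact ENNReal.rpow_le_rpow (lintegral_mono hsq) (by norm_num)
        _ = (ENNReal.ofReal (2^s * (C2 * t ^ (-(d:ℝ) - ((∑ j, β j : ℕ):ℝ) - s))) *
              ENNReal.ofReal ((4*Real.pi*t) ^ ((d:ℝ)/2))) ^ (1/(2:ℝ)) := by
            rw [← htrans]
            congr 1
            rw [← lintegral_const_mul' _ _ ENNReal.ofReal_ne_top]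
            congr 1
            funext y
            rw [← ENNReal.ofReal_mul (by positivity)]
        _ ≤ ENNReal.ofReal ((2^(s/2) * C1 + D) * t ^ e2) := by
            rw [← ENNReal.ofReal_mul (by positivity),
              ENNReal.ofReal_rpow_of_nonneg (by positivity) (by norm_num)]
            apply ENNReal.ofReal_le_ofReal
            have heq : (2^s * (C2 * t ^ (-(d:ℝ) - ((∑ j, β j : ℕ):ℝ) - s)) *
                (4*Real.pi*t) ^ ((d:ℝ)/2)) ^ (1/(2:ℝ)) = D * t ^ e2 := by
              rw [Real.mul_rpow (by positivity) ht.le]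
              rw [show 2^s * (C2 * t ^ (-(d:ℝ) - ((∑ j, β j : ℕ):ℝ) - s)) *
                    ((4*Real.pi) ^ ((d:ℝ)/2) * t ^ ((d:ℝ)/2)) =
                  (2^s * C2 * (4*Real.pi) ^ ((d:ℝ)/2)) *
                    (t ^ (-(d:ℝ) - ((∑ j, β j : ℕ):ℝ) - s) * t ^ ((d:ℝ)/2)) by ring]
              rw [← Real.rpow_add ht]
              rw [Real.mul_rpow (by positivity) (Real.rpow_nonneg ht.le _)]
              rw [← Real.rpow_mul ht.le]
              rw [hDdef, Real.sqrt_eq_rpow]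
              congr 1
              rw [he2]; ring
            rw [heq]
            apply mul_le_mul_of_nonneg_right ?_ (Real.rpow_nonneg ht.le _)
            nlinarith [Real.rpow_nonneg (show (0:ℝ) ≤ 2 by norm_num) (s/2),
              mul_nonneg (Real.rpow_nonneg (show (0:ℝ) ≤ 2 by norm_num) (s/2)) hC1]
    rw [eLpNorm_exponent_top]
    refine le_trans (eLpNormEssSup_le_of_ae_bound (C := B.toReal) ?_) ?_
    · filter_upwards with x
      have h := hbnd x
      calc ‖jap x ^ (-s) • ∫ y, (heatKernelDeriv d β t (x - y) * jap y ^ (-s)) • φ y‖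
          = (ENNReal.ofReal ‖jap x ^ (-s) •
              ∫ y, (heatKernelDeriv d β t (x - y) * jap y ^ (-s)) • φ y‖).toReal :=
            (ENNReal.toReal_ofReal (norm_nonneg _)).symm
        _ ≤ B.toReal := ENNReal.toReal_mono hBne h
    · rw [ENNReal.ofReal_toReal hBne]
  · -- L¹ → L∞
    intro φ hφ
    set e1 : ℝ := -(d : ℝ) / 2 - ((∑ j, β j : ℕ) : ℝ) / 2 - s / 2 with he1
    set B : ℝ≥0∞ := ENNReal.ofReal ((2^(s/2) * C1 + D) * t ^ e1) * eLpNorm φ 1 volume with hBdef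
    have hBne : B ≠ ⊤ := ENNReal.mul_ne_top ENNReal.ofReal_ne_top hφ.eLpNorm_ne_top
    have hbnd : ∀ x : Ed d, ENNReal.ofReal ‖jap x ^ (-s) •
        ∫ y, (heatKernelDeriv d β t (x - y) * jap y ^ (-s)) • φ y‖ ≤ B := by
      intro x
      refine (key φ x).trans ?_
      calc ∫⁻ y, ENNReal.ofReal (g (x - y)) * (‖φ y‖₊ : ℝ≥0∞)
          ≤ ∫⁻ y, ENNReal.ofReal ((2^(s/2) * C1 + D) * t ^ e1) * (‖φ y‖₊ : ℝ≥0∞) := by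
            apply lintegral_mono
            intro y
            apply mul_le_mul_left
            apply ENNReal.ofReal_le_ofReal
            calc g (x - y) = 2^(s/2) * (|heatKernelDeriv d β t (x - y)| * jap (x-y) ^ (-s)) := by
                  rw [hgdef]
              _ ≤ 2^(s/2) * (C1 * t ^ e1) := by
                  apply mul_le_mul_of_nonneg_left (hK1 t ht (x - y)) (by positivity)
              _ ≤ (2^(s/2) * C1 + D) * t ^ e1 := by
                  have := Real.rpow_nonneg ht.le e1
                  nlinarith [mul_nonneg hD this]
        _ = ENNReal.ofReal ((2^(s/2) * C1 + D) * t ^ e1) * ∫⁻ y, (‖φ y‖₊ : ℝ≥0∞) :=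
            lintegral_const_mul' _ _ ENNReal.ofReal_ne_top
        _ = B := by rw [hBdef, eLpNorm_one_eq_lintegral_enorm]; rfl
    rw [eLpNorm_exponent_top]
    refine le_trans (eLpNormEssSup_le_of_ae_bound (C := B.toReal) ?_) ?_
    · filter_upwards with x
      have h := hbnd x
      calc ‖jap x ^ (-s) • ∫ y, (heatKernelDeriv d β t (x - y) * jap y ^ (-s)) • φ y‖
          = (ENNReal.ofReal ‖jap x ^ (-s) •
              ∫ y, (heatKernelDeriv d β t (x - y) * jap y ^ (-s)) • φ y‖).toReal :=
            (ENNReal.toReal_ofReal (norm_nonneg _)).symm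
        _ ≤ B.toReal := ENNReal.toReal_mono hBne h
    · rw [ENNReal.ofReal_toReal hBne]

end
end
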